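/- Let K be a subfield of ℂ, and let f, g : ℂ^n → ℂ^n be polynomial maps all of whose coefficients lie in K, with f ∘ g = g ∘ f. Let P ∈ K^n be a periodic point of f of exact period l, and suppose det D(g)(P) ≠ 0. If for every divisor l₀ of l with l₀ > 1 there is no element c ∈ K with c^{l₀} = det D(f^l)(P), then g preserves the f-period of P: g(P) is a periodic point of f of exact period l. -/

import Mathlib

open MvPolynomial

noncomputable def polyD {n : ℕ} (p : MvPolynomial (Fin n) ℂ) (x : Fin n → ℂ) :
    (Fin n → ℂ) →L[ℂ] ℂ :=
  ∑ j, MvPolynomial.eval x (pderiv j p) • (ContinuousLinearMap.proj j : (Fin n → ℂ) →L[ℂ] ℂ)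

lemma polyD_apply {n : ℕ} (p : MvPolynomial (Fin n) ℂ) (x v : Fin n → ℂ) :
    polyD p x v = ∑ j, MvPolynomial.eval x (pderiv j p) * v j := by
  simp [polyD, ContinuousLinearMap.sum_apply]

lemma hasFDerivAt_polyD {n : ℕ} (p : MvPolynomial (Fin n) ℂ) (x : Fin n → ℂ) :
    HasFDerivAt (fun y => MvPolynomial.eval y p) (polyD p x) x := by
  induction p using MvPolynomial.induction_on with
  | C a =>
      have : polyD (C a : MvPolynomial (Fin n) ℂ) x = 0 := by
        ext v; simp [polyD_apply]
      rw [this]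
      simpa using hasFDerivAt_const (E := Fin n → ℂ) (𝕜 := ℂ) a x
  | add p q hp hq =>
      have : polyD (p + q) x = polyD p x + polyD q x := by
        ext v; simp [polyD_apply, add_mul, Finset.sum_add_distrib]
      rw [this]
      exact (hp.add hq).congr_of_eventuallyEq (by filter_upwards with y; simp)
  | mul_X p i hp =>
      have h2 : HasFDerivAt (fun y : Fin n → ℂ => y i)
          (ContinuousLinearMap.proj i : (Fin n → ℂ) →L[ℂ] ℂ) x := hasFDerivAt_apply i x
      have h := hp.mul h2
      have e : polyD (p * X i) x
          = MvPolynomial.eval x p • (ContinuousLinearMap.proj i : (Fin n → ℂ) →L[ℂ] ℂ)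
            + x i • polyD p x := by
        ext v
        simp only [ContinuousLinearMap.add_apply, ContinuousLinearMap.smul_apply,
          polyD_apply, ContinuousLinearMap.proj_apply, smul_eq_mul]
        have step : ∀ j : Fin n, MvPolynomial.eval x (pderiv j (p * X i)) * v j
            = MvPolynomial.eval x (pderiv j p) * x i * v j
              + (if i = j then MvPolynomial.eval x p * v j else 0) := by
          intro j
          rw [pderiv_mul, pderiv_X]
          by_cases hji : i = j
          · subst hji; simp [Pi.single_apply]; ring
          · simp [Pi.single_apply, hji]
        rw [Finset.sum_congr rfl fun j _ => step j]
        rw [Finset.sum_add_distrib, Finset.sum_ite_eq]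
        simp only [Finset.mem_univ, if_true]
        rw [add_comm]
        congr 1
        rw [Finset.mul_sum]
        exact Finset.sum_congr rfl fun j _ => by ring
      rw [e]
      exact h.congr_of_eventuallyEq (by filter_upwards with y; simp)

noncomputable def Jmat {n : ℕ} (pp : Fin n → MvPolynomial (Fin n) ℂ) (x : Fin n → ℂ) :
    Matrix (Fin n) (Fin n) ℂ :=
  Matrix.of fun i j => MvPolynomial.eval x (pderiv j (pp i))

noncomputable def Jclm {n : ℕ} (pp : Fin n → MvPolynomial (Fin n) ℂ) (x : Fin n → ℂ) :
    (Fin n → ℂ) →L[ℂ] (Fin n → ℂ) :=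
  ContinuousLinearMap.pi (fun i => polyD (pp i) x)

lemma hasFDerivAt_polymap {n : ℕ} (pp : Fin n → MvPolynomial (Fin n) ℂ)
    (F : (Fin n → ℂ) → (Fin n → ℂ)) (hF : ∀ x i, F x i = MvPolynomial.eval x (pp i))
    (x : Fin n → ℂ) : HasFDerivAt F (Jclm pp x) x := by
  have hFe : F = fun x i => MvPolynomial.eval x (pp i) := funext fun x => funext fun i => hF x i
  subst hFe
  apply hasFDerivAt_pi''
  intro i
  unfold Jclm
  rw [ContinuousLinearMap.proj_pi]
  exact hasFDerivAt_polyD _ x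

lemma det_Jclm {n : ℕ} (pp : Fin n → MvPolynomial (Fin n) ℂ) (x : Fin n → ℂ) :
    (Jclm pp x).det = (Jmat pp x).det := by
  have h : ((Jclm pp x : (Fin n → ℂ) →L[ℂ] (Fin n → ℂ)) : (Fin n → ℂ) →ₗ[ℂ] (Fin n → ℂ))
      = Matrix.toLin' (Jmat pp x) := by
    apply LinearMap.ext
    intro v
    funext i
    simp [Jclm, polyD_apply, Matrix.toLin'_apply, Matrix.mulVec, dotProduct, Jmat]
  show LinearMap.det _ = _
  rw [h, LinearMap.det_toLin']

lemma fderiv_polymap {n : ℕ} (pp : Fin n → MvPolynomial (Fin n) ℂ)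
    (F : (Fin n → ℂ) → (Fin n → ℂ)) (hF : ∀ x i, F x i = MvPolynomial.eval x (pp i))
    (x : Fin n → ℂ) : fderiv ℂ F x = Jclm pp x :=
  (hasFDerivAt_polymap pp F hF x).fderiv

lemma diff_polymap {n : ℕ} (pp : Fin n → MvPolynomial (Fin n) ℂ)
    (F : (Fin n → ℂ) → (Fin n → ℂ)) (hF : ∀ x i, F x i = MvPolynomial.eval x (pp i)) :
    Differentiable ℂ F := fun x => (hasFDerivAt_polymap pp F hF x).differentiableAt

lemma coeff_pderiv_mem {n : ℕ} (K : Subfield ℂ) (p : MvPolynomial (Fin n) ℂ)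
    (hp : ∀ m, p.coeff m ∈ K) (j : Fin n) (m : Fin n →₀ ℕ) :
    (pderiv j p).coeff m ∈ K := by
  rw [show pderiv j p = ∑ v ∈ p.support, pderiv j (MvPolynomial.monomial v (p.coeff v)) from
    by rw [← map_sum, ← p.as_sum], MvPolynomial.coeff_sum]
  apply sum_mem
  intro v _
  rw [pderiv_monomial, MvPolynomial.coeff_monomial]
  split
  · exact mul_mem (hp v) (natCast_mem K (v j))
  · exact zero_mem K

lemma det_mem_subfield {n : ℕ} (K : Subfield ℂ) (M : Matrix (Fin n) (Fin n) ℂ)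
    (h : ∀ i j, M i j ∈ K) : M.det ∈ K := by
  rw [Matrix.det_apply]
  apply sum_mem
  intro σ _
  rw [Units.smul_def]
  exact zsmul_mem (prod_mem fun i _ => h _ _) _

lemma comp_det {n : ℕ} (u v : (Fin n → ℂ) → (Fin n → ℂ)) (hu : Differentiable ℂ u)
    (hv : Differentiable ℂ v) (x : Fin n → ℂ) :
    (fderiv ℂ (u ∘ v) x).det = (fderiv ℂ u (v x)).det * (fderiv ℂ v x).det := by
  rw [fderiv_comp x (hu _) (hv _)]
  show LinearMap.det _ = _
  rw [ContinuousLinearMap.toLinearMap_comp, LinearMap.det_comp]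

lemma det_iterate {n : ℕ} (F : (Fin n → ℂ) → (Fin n → ℂ)) (hF : Differentiable ℂ F)
    (s : ℕ) (x : Fin n → ℂ) :
    (fderiv ℂ (F^[s]) x).det = ∏ j ∈ Finset.range s, (fderiv ℂ F (F^[j] x)).det := by
  induction s with
  | zero =>
      simp only [Function.iterate_zero, fderiv_id, Finset.range_zero, Finset.prod_empty]
      show LinearMap.det _ = 1
      simp
  | succ s ih =>
      rw [Function.iterate_succ', comp_det F (F^[s]) hF (hF.iterate s) x,
        Finset.prod_range_succ, ih]
      ring


/-- Let `K ⊆ ℂ` be a subfield, `f, g : ℂ^n → ℂ^n` commuting polynomial maps with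
coefficients in `K`, and `P ∈ K^n` an `f`-periodic point of exact period `l` which is not a
critical point of `g`.  If for every divisor `l₀ > 1` of `l` the multiplier `det D(f^[l])(P)`
has no `l₀`-th root in `K`, then `g P` is an `f`-periodic point of exact period `l`. -/
theorem period_preserved_of_no_root {n : ℕ} (K : Subfield ℂ)
    (f g : (Fin n → ℂ) → (Fin n → ℂ))
    (pf pg : Fin n → MvPolynomial (Fin n) ℂ)
    (hfp : ∀ (x : Fin n → ℂ) (i : Fin n), f x i = MvPolynomial.eval x (pf i))
    (hgp : ∀ (x : Fin n → ℂ) (i : Fin n), g x i = MvPolynomial.eval x (pg i))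
    (hfK : ∀ (i : Fin n) (m : Fin n →₀ ℕ), (pf i).coeff m ∈ K)
    (hgK : ∀ (i : Fin n) (m : Fin n →₀ ℕ), (pg i).coeff m ∈ K)
    (hcomm : f ∘ g = g ∘ f)
    (P : Fin n → ℂ) (hPK : ∀ i : Fin n, P i ∈ K)
    (l : ℕ) (hl : 1 ≤ l) (hPl : f^[l] P = P)
    (hPexact : ∀ k : ℕ, 1 ≤ k → k < l → f^[k] P ≠ P)
    (hcrit : (fderiv ℂ g P).det ≠ 0)
    (hroot : ∀ l₀ : ℕ, l₀ ∣ l → 1 < l₀ →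
      ¬ ∃ c ∈ K, c ^ l₀ = (fderiv ℂ (f^[l]) P).det) :
    f^[l] (g P) = g P ∧ ∀ k : ℕ, 1 ≤ k → k < l → f^[k] (g P) ≠ g P := by
  have hdf : Differentiable ℂ f := diff_polymap pf f hfp
  have hc : Function.Commute f g := fun x => congrFun hcomm x
  have hiter : ∀ x, f^[l] (g x) = g (f^[l] x) := fun x => (hc.iterate_left l) x
  have part1 : f^[l] (g P) = g P := by rw [hiter, hPl]
  refine ⟨part1, ?_⟩
  intro k hk1 hkl hgPk
  -- g P is a periodic point
  have hperk : Function.IsPeriodicPt f k (g P) := hgPk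
  have hperl : Function.IsPeriodicPt f l (g P) := part1
  set m := Function.minimalPeriod f (g P) with hm
  have hmem : g P ∈ Function.periodicPts f := ⟨k, hk1, hperk⟩
  have hm0 : 0 < m := Function.minimalPeriod_pos_of_mem_periodicPts hmem
  have hmdvdl : m ∣ l := Function.IsPeriodicPt.minimalPeriod_dvd hperl
  have hmdvdk : m ∣ k := Function.IsPeriodicPt.minimalPeriod_dvd hperk
  have hml : m < l := lt_of_le_of_lt (Nat.le_of_dvd hk1 hmdvdk) hkl
  set s := l / m with hs
  have hls : m * s = l := Nat.mul_div_cancel' hmdvdl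
  have hsgt : 1 < s := by
    by_contra hle
    push_neg at hle
    have : l ≤ m := by
      calc l = m * s := hls.symm
        _ ≤ m * 1 := Nat.mul_le_mul_left m hle
        _ = m := mul_one m
    omega
  have hsdvd : s ∣ l := ⟨m, by rw [← hls, mul_comm]⟩
  -- membership of orbit points in K^n
  have hfKmap : ∀ x : Fin n → ℂ, (∀ i, x i ∈ K) → ∀ i, f x i ∈ K := by
    intro x hx i
    rw [hfp]
    exact MvPolynomial.eval_mem (fun m _ => hfK i m) hx
  have hgPmem : ∀ i, g P i ∈ K := by
    intro i
    rw [hgp]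
    exact MvPolynomial.eval_mem (fun m _ => hgK i m) hPK
  have horb : ∀ j : ℕ, ∀ i, (f^[j] (g P)) i ∈ K := by
    intro j
    induction j with
    | zero => simpa using hgPmem
    | succ j ih => rw [Function.iterate_succ_apply']; exact hfKmap _ ih
  -- det of fderiv of f at K-points is in K
  have hdetK : ∀ x : Fin n → ℂ, (∀ i, x i ∈ K) → (fderiv ℂ f x).det ∈ K := by
    intro x hx
    rw [fderiv_polymap pf f hfp x, det_Jclm]
    apply det_mem_subfield
    intro i j
    exact MvPolynomial.eval_mem (fun m _ => coeff_pderiv_mem K (pf i) (hfK i) j m) hx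
  -- c := det of fderiv of f^[m] at g P, lies in K
  set c := (fderiv ℂ (f^[m]) (g P)).det with hcdef
  have hcK : c ∈ K := by
    rw [hcdef, det_iterate f hdf m (g P)]
    exact prod_mem fun j _ => hdetK _ (horb j)
  -- g P is a fixed point of f^[m]
  have hfixm : Function.IsFixedPt (f^[m]) (g P) := Function.isPeriodicPt_minimalPeriod f (g P)
  -- det D(f^[l])(g P) = c ^ s
  have hpow : (fderiv ℂ (f^[l]) (g P)).det = c ^ s := by
    have : f^[l] = (f^[m])^[s] := by rw [← hls, Function.iterate_mul]
    rw [this, det_iterate (f^[m]) (hdf.iterate m) s (g P)]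
    rw [Finset.prod_congr rfl fun j _ => by rw [hfixm.iterate j]]
    rw [Finset.prod_const, Finset.card_range]
  -- conjugation: det D(f^[l])(g P) = det D(f^[l])(P)
  have hdl : Differentiable ℂ (f^[l]) := hdf.iterate l
  have hdg : Differentiable ℂ g := diff_polymap pg g hgp
  have hconj : (fderiv ℂ (f^[l]) (g P)).det = (fderiv ℂ (f^[l]) P).det := by
    have e1 : f^[l] ∘ g = g ∘ f^[l] := funext fun x => (hc.iterate_left l) x
    have e2 : (fderiv ℂ (f^[l] ∘ g) P).det = (fderiv ℂ (g ∘ f^[l]) P).det := by rw [e1]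
    rw [comp_det (f^[l]) g hdl hdg P, comp_det g (f^[l]) hdg hdl P, hPl] at e2
    exact mul_right_cancel₀ hcrit (by rw [e2]; ring)
  exact hroot s hsdvd hsgt ⟨c, hcK, by rw [← hconj, ← hpow]⟩
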